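/- arXiv:2004.03593 — 2 statements merged into one kernel-verified Lean document; each statement's English description precedes it below -/
import Mathlib

section
/- For normal, convex functions f, g : [0,1] → [0,1], the modified intersection f ⋆ g is again normal and convex. -/
open Set Classical

noncomputable section

/-- Left envelope: `f^L(x) = sup {f y : 0 ≤ y ≤ x}`. -/
def fL (f : ℝ → ℝ) (x : ℝ) : ℝ := sSup (f '' Set.Icc 0 x)

/-- Weak left envelope: `f^{Lw}(x) = sup {f y : 0 ≤ y < x}` (for `x ∈ (0,1]`). -/
def fLw (f : ℝ → ℝ) (x : ℝ) : ℝ := sSup (f '' Set.Ico 0 x)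

/-- Right envelope: `f^R(x) = sup {f y : x ≤ y ≤ 1}`. -/
def fR (f : ℝ → ℝ) (x : ℝ) : ℝ := sSup (f '' Set.Icc x 1)

/-- `f` maps `[0,1]` into `[0,1]`. -/
def MapsI (f : ℝ → ℝ) : Prop := ∀ x ∈ Set.Icc (0:ℝ) 1, f x ∈ Set.Icc (0:ℝ) 1

/-- `f` is normal: `sup f = 1` on `[0,1]`. -/
def NormalFn (f : ℝ → ℝ) : Prop := sSup (f '' Set.Icc 0 1) = 1

/-- `f` is convex: `f y ≥ min (f x) (f z)` whenever `0 ≤ x ≤ y ≤ z ≤ 1`. -/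
def ConvexFn (f : ℝ → ℝ) : Prop :=
  ∀ x y z : ℝ, 0 ≤ x → x ≤ y → y ≤ z → z ≤ 1 → min (f x) (f z) ≤ f y

/-- Convolution intersection: `(f ⊓ g)(x) = sup {min (f y) (g z) : min y z = x}`. -/
def inter (f g : ℝ → ℝ) (x : ℝ) : ℝ :=
  sSup {v | ∃ y ∈ Set.Icc (0:ℝ) 1, ∃ z ∈ Set.Icc (0:ℝ) 1, min y z = x ∧ v = min (f y) (g z)}

/-- Convolution union: `(f ⊔ g)(x) = sup {min (f y) (g z) : max y z = x}`. -/
def union (f g : ℝ → ℝ) (x : ℝ) : ℝ :=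
  sSup {v | ∃ y ∈ Set.Icc (0:ℝ) 1, ∃ z ∈ Set.Icc (0:ℝ) 1, max y z = x ∧ v = min (f y) (g z)}

/-- `L₁(f) = inf {x ∈ [0,1] : f^L(x) = 1}`. -/
def L1 (f : ℝ → ℝ) : ℝ := sInf {x ∈ Set.Icc (0:ℝ) 1 | fL f x = 1}

/-- `R¹(f) = sup {x ∈ [0,1] : f^R(x) = 1}`. -/
def R1 (f : ℝ → ℝ) : ℝ := sSup {x ∈ Set.Icc (0:ℝ) 1 | fR f x = 1}

/-- The characteristic function `1_{{1}}`. -/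
def ind1 : ℝ → ℝ := fun x => if x = 1 then 1 else 0

/-- The modified intersection `f ⋆ g`. -/
def star (f g : ℝ → ℝ) : ℝ → ℝ :=
  if Set.EqOn f ind1 (Set.Icc (0:ℝ) 1) then g
  else if Set.EqOn g ind1 (Set.Icc (0:ℝ) 1) then f
  else if min (f 1) (g 1) = 1 then inter f g
  else fun x => if x = 1 then 0 else inter f g x

def S (f g : ℝ → ℝ) (x : ℝ) : Set ℝ :=
  {v | ∃ y ∈ Set.Icc (0:ℝ) 1, ∃ z ∈ Set.Icc (0:ℝ) 1, min y z = x ∧ v = min (f y) (g z)}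

lemma inter_eq (f g : ℝ → ℝ) (x : ℝ) : inter f g x = sSup (S f g x) := rfl

lemma S_bdd {f g : ℝ → ℝ} (hf : MapsI f) (x : ℝ) : BddAbove (S f g x) := by
  refine ⟨1, ?_⟩
  rintro v ⟨y, hy, z, hz, -, rfl⟩
  exact le_trans (min_le_left _ _) (hf y hy).2

lemma S_nonempty {f g : ℝ → ℝ} {x : ℝ} (hx : x ∈ Set.Icc (0:ℝ) 1) :
    (S f g x).Nonempty := ⟨min (f x) (g x), x, hx, x, hx, min_self x, rfl⟩

lemma inter_ge {f g : ℝ → ℝ} (hf : MapsI f) {y z : ℝ}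
    (hy : y ∈ Set.Icc (0:ℝ) 1) (hz : z ∈ Set.Icc (0:ℝ) 1) :
    min (f y) (g z) ≤ inter f g (min y z) :=
  le_csSup (S_bdd hf _) ⟨y, hy, z, hz, rfl, rfl⟩

lemma inter_le_one {f g : ℝ → ℝ} (hf : MapsI f) {x : ℝ} (hx : x ∈ Set.Icc (0:ℝ) 1) :
    inter f g x ≤ 1 := by
  refine csSup_le (S_nonempty hx) ?_
  rintro v ⟨y, hy, z, hz, -, rfl⟩
  exact le_trans (min_le_left _ _) (hf y hy).2

lemma inter_nonneg {f g : ℝ → ℝ} (hf : MapsI f) (hg : MapsI g) {x : ℝ}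
    (hx : x ∈ Set.Icc (0:ℝ) 1) : 0 ≤ inter f g x := by
  have := inter_ge (g := g) hf hx hx
  rw [min_self] at this
  exact le_trans (le_min (hf x hx).1 (hg x hx).1) this

lemma exists_big {f : ℝ → ℝ} (hfn : NormalFn f) {c : ℝ} (hc : c < 1) :
    ∃ y ∈ Set.Icc (0:ℝ) 1, c < f y := by
  have hne : (f '' Set.Icc (0:ℝ) 1).Nonempty :=
    ⟨f 0, 0, by constructor <;> norm_num, rfl⟩
  have := exists_lt_of_lt_csSup hne (by rw [hfn]; exact hc)
  obtain ⟨v, ⟨y, hy, rfl⟩, hv⟩ := this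
  exact ⟨y, hy, hv⟩

lemma convex_inter {f g : ℝ → ℝ} (hf : MapsI f) (hg : MapsI g)
    (hfc : ConvexFn f) (hgc : ConvexFn g) : ConvexFn (inter f g) := by
  intro x y z hx hxy hyz hz1
  have hyI : y ∈ Set.Icc (0:ℝ) 1 := ⟨le_trans hx hxy, le_trans hyz hz1⟩
  have hxI : x ∈ Set.Icc (0:ℝ) 1 := ⟨hx, le_trans hxy hyI.2⟩
  have hzI : z ∈ Set.Icc (0:ℝ) 1 := ⟨le_trans hyI.1 hyz, hz1⟩
  refine le_of_forall_lt fun c hc => ?_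
  obtain ⟨hcx, hcz⟩ := lt_min_iff.mp hc
  rw [inter_eq] at hcx hcz
  obtain ⟨v, ⟨a₁, ha₁, a₂, ha₂, hax, rfl⟩, hcv⟩ :=
    exists_lt_of_lt_csSup (S_nonempty hxI) hcx
  obtain ⟨w, ⟨c₁, hc₁, c₂, hc₂, hcz', rfl⟩, hcw⟩ :=
    exists_lt_of_lt_csSup (S_nonempty hzI) hcz
  -- c₁, c₂ ≥ y
  have hc₁y : y ≤ c₁ := le_trans hyz (hcz' ▸ min_le_left c₁ c₂)
  have hc₂y : y ≤ c₂ := le_trans hyz (hcz' ▸ min_le_right c₁ c₂)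
  set y₁ := max a₁ y with hy₁
  set y₂ := max a₂ y with hy₂
  have hy₁I : y₁ ∈ Set.Icc (0:ℝ) 1 := ⟨le_trans ha₁.1 (le_max_left _ _),
    max_le ha₁.2 hyI.2⟩
  have hy₂I : y₂ ∈ Set.Icc (0:ℝ) 1 := ⟨le_trans ha₂.1 (le_max_left _ _),
    max_le ha₂.2 hyI.2⟩
  have hminy : min y₁ y₂ = y := by
    rw [hy₁, hy₂, ← max_min_distrib_right, hax]
    exact max_eq_right hxy
  have hf1 : min (f a₁) (f c₁) ≤ f y₁ := by
    rcases le_total a₁ y with h | h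
    · rw [hy₁, max_eq_right h]
      exact hfc a₁ y c₁ ha₁.1 h hc₁y hc₁.2
    · rw [hy₁, max_eq_left h]; exact min_le_left _ _
  have hg1 : min (g a₂) (g c₂) ≤ g y₂ := by
    rcases le_total a₂ y with h | h
    · rw [hy₂, max_eq_right h]
      exact hgc a₂ y c₂ ha₂.1 h hc₂y hc₂.2
    · rw [hy₂, max_eq_left h]; exact min_le_left _ _
  have key : min (min (f a₁) (g a₂)) (min (f c₁) (g c₂)) ≤ min (f y₁) (g y₂) := by
    apply le_min
    · exact le_trans (min_le_min (min_le_left _ _) (min_le_left _ _)) hf1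
    · exact le_trans (min_le_min (min_le_right _ _) (min_le_right _ _)) hg1
  calc c < min (min (f a₁) (g a₂)) (min (f c₁) (g c₂)) := lt_min hcv hcw
    _ ≤ min (f y₁) (g y₂) := key
    _ ≤ inter f g (min y₁ y₂) := inter_ge hf hy₁I hy₂I
    _ = inter f g y := by rw [hminy]

lemma normal_inter {f g : ℝ → ℝ} (hf : MapsI f) (hg : MapsI g)
    (hfn : NormalFn f) (hgn : NormalFn g) : NormalFn (inter f g) := by
  unfold NormalFn
  apply le_antisymm
  · refine csSup_le ⟨inter f g 0, 0, by constructor <;> norm_num, rfl⟩ ?_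
    rintro v ⟨x, hx, rfl⟩
    exact inter_le_one hf hx
  · refine le_of_forall_lt fun c hc => ?_
    obtain ⟨y, hy, hfy⟩ := exists_big hfn hc
    obtain ⟨z, hz, hgz⟩ := exists_big hgn hc
    have h1 : c < inter f g (min y z) :=
      lt_of_lt_of_le (lt_min hfy hgz) (inter_ge hf hy hz)
    have hmI : min y z ∈ Set.Icc (0:ℝ) 1 := ⟨le_min hy.1 hz.1,
      le_trans (min_le_left _ _) hy.2⟩
    refine lt_of_lt_of_le h1 (le_csSup ?_ ⟨_, hmI, rfl⟩)
    exact ⟨1, by rintro v ⟨x, hx, rfl⟩; exact inter_le_one hf hx⟩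

lemma exists_big_lt {f : ℝ → ℝ} (hfn : NormalFn f) (hf1 : f 1 < 1) {c : ℝ} (hc : c < 1) :
    ∃ y ∈ Set.Icc (0:ℝ) 1, c < f y ∧ y < 1 := by
  obtain ⟨y, hy, hfy⟩ := exists_big hfn (max_lt hc hf1)
  refine ⟨y, hy, lt_of_le_of_lt (le_max_left _ _) hfy, ?_⟩
  rcases lt_or_eq_of_le hy.2 with h | h
  · exact h
  · exact absurd hfy (by rw [h]; exact not_lt.2 (le_max_right _ _))

lemma normal_mod {f g : ℝ → ℝ} (hf : MapsI f) (hg : MapsI g)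
    (hfn : NormalFn f) (hgn : NormalFn g) (h1 : min (f 1) (g 1) < 1) :
    NormalFn (fun x => if x = 1 then 0 else inter f g x) := by
  set h : ℝ → ℝ := fun x => if x = 1 then 0 else inter f g x with hh
  have hle1 : ∀ x ∈ Set.Icc (0:ℝ) 1, h x ≤ 1 := by
    intro x hx
    by_cases hx1 : x = 1
    · simp [hh, hx1]
    · simpa [hh, hx1] using inter_le_one (g := g) hf hx
  unfold NormalFn
  apply le_antisymm
  · refine csSup_le ⟨h 0, 0, by constructor <;> norm_num, rfl⟩ ?_
    rintro v ⟨x, hx, rfl⟩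
    exact hle1 x hx
  · refine le_of_forall_lt fun c hc => ?_
    have key : ∃ m ∈ Set.Icc (0:ℝ) 1, m < 1 ∧ c < inter f g m := by
      rcases min_lt_iff.mp h1 with hlt | hlt
      · obtain ⟨y, hy, hfy, hy1⟩ := exists_big_lt hfn hlt hc
        obtain ⟨z, hz, hgz⟩ := exists_big hgn hc
        exact ⟨min y z, ⟨le_min hy.1 hz.1, le_trans (min_le_left _ _) hy.2⟩,
          lt_of_le_of_lt (min_le_left _ _) hy1,
          lt_of_lt_of_le (lt_min hfy hgz) (inter_ge hf hy hz)⟩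
      · obtain ⟨z, hz, hgz, hz1⟩ := exists_big_lt hgn hlt hc
        obtain ⟨y, hy, hfy⟩ := exists_big hfn hc
        exact ⟨min y z, ⟨le_min hy.1 hz.1, le_trans (min_le_left _ _) hy.2⟩,
          lt_of_le_of_lt (min_le_right _ _) hz1,
          lt_of_lt_of_le (lt_min hfy hgz) (inter_ge hf hy hz)⟩
    obtain ⟨m, hmI, hm1, hcm⟩ := key
    have : c < h m := by simpa [hh, ne_of_lt hm1] using hcm
    refine lt_of_lt_of_le this (le_csSup ?_ ⟨m, hmI, rfl⟩)
    exact ⟨1, by rintro v ⟨x, hx, rfl⟩; exact hle1 x hx⟩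

lemma convex_mod {f g : ℝ → ℝ} (hf : MapsI f) (hg : MapsI g)
    (hfc : ConvexFn f) (hgc : ConvexFn g) :
    ConvexFn (fun x => if x = 1 then 0 else inter f g x) := by
  intro x y z hx hxy hyz hz1
  by_cases hy1 : y = 1
  · have hz : z = 1 := le_antisymm hz1 (hy1 ▸ hyz)
    simp [hy1, hz]
  · simp only [hy1, if_neg]
    have hyI : y ∈ Set.Icc (0:ℝ) 1 := ⟨le_trans hx hxy, le_trans hyz hz1⟩
    have h0 : 0 ≤ inter f g y := inter_nonneg hf hg hyI
    by_cases hz : z = 1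
    · simp only [hz, if_pos]
      exact le_trans (min_le_right _ _) h0
    · by_cases hx1 : x = 1
      · exact absurd (le_antisymm (le_trans hyz hz1) (hx1 ▸ hxy)) hy1
      · simp only [hx1, hz, if_neg]
        exact convex_inter hf hg hfc hgc x y z hx hxy hyz hz1

/-- `f ⋆ g` is normal and convex for normal convex `f, g`. -/
theorem stmt_14 (f g : ℝ → ℝ) (hf : MapsI f) (hg : MapsI g)
    (hfn : NormalFn f) (hfc : ConvexFn f) (hgn : NormalFn g) (hgc : ConvexFn g) :
    NormalFn (star f g) ∧ ConvexFn (star f g) := by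
  unfold _root_.star
  split_ifs with h1 h2 h3
  · exact ⟨hgn, hgc⟩
  · exact ⟨hfn, hfc⟩
  · exact ⟨normal_inter hf hg hfn hgn, convex_inter hf hg hfc hgc⟩
  · have hlt : min (f 1) (g 1) < 1 :=
      lt_of_le_of_ne (le_trans (min_le_left _ _) (hf 1 ⟨by norm_num, le_rfl⟩).2) h3
    exact ⟨normal_mod hf hg hfn hgn hlt, convex_mod hf hg hfc hgc⟩
end
end

section
/- The operation ⋆ on normal, convex functions is associative: (f ⋆ g) ⋆ h = f ⋆ (g ⋆ h) for all normal convex f, g, h : [0,1] → [0,1]. -/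
open Set Classical

noncomputable section

section Aux
variable {f g h : ℝ → ℝ} {x : ℝ}

lemma bdd_img (hf : MapsI f) {s : Set ℝ} (hs : s ⊆ Set.Icc 0 1) : BddAbove (f '' s) :=
  ⟨1, by rintro _ ⟨y, hy, rfl⟩; exact (hf y (hs hy)).2⟩

lemma le_fR (hf : MapsI f) {t : ℝ} (hx : 0 ≤ x) (ht : t ∈ Set.Icc x 1) : f t ≤ fR f x :=
  le_csSup (bdd_img hf (Set.Icc_subset_Icc_left hx)) ⟨t, ht, rfl⟩

lemma fR_mem (hf : MapsI f) (hx : x ∈ Set.Icc (0:ℝ) 1) : fR f x ∈ Set.Icc (0:ℝ) 1 := by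
  constructor
  · exact le_trans (hf 1 ⟨zero_le_one, le_rfl⟩).1 (le_fR hf hx.1 ⟨hx.2, le_rfl⟩)
  · exact csSup_le ⟨f 1, 1, ⟨hx.2, le_rfl⟩, rfl⟩
      (by rintro _ ⟨y, hy, rfl⟩; exact (hf y ⟨le_trans hx.1 hy.1, hy.2⟩).2)

lemma fR_anti (hf : MapsI f) {y : ℝ} (hx : 0 ≤ x) (hxy : x ≤ y) (hy : y ≤ 1) :
    fR f y ≤ fR f x :=
  csSup_le ⟨f y, y, ⟨le_rfl, hy⟩, rfl⟩
    (by rintro _ ⟨t, ht, rfl⟩; exact le_fR hf hx ⟨le_trans hxy ht.1, ht.2⟩)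

lemma fR_one : fR f 1 = f 1 := by
  unfold fR
  rw [Set.Icc_self, Set.image_singleton, csSup_singleton]

lemma interSet_nonempty (hx : x ∈ Set.Icc (0:ℝ) 1) :
    {v | ∃ y ∈ Set.Icc (0:ℝ) 1, ∃ z ∈ Set.Icc (0:ℝ) 1, min y z = x ∧ v = min (f y) (g z)}.Nonempty :=
  ⟨min (f x) (g x), x, hx, x, hx, min_self x, rfl⟩

lemma interSet_bdd (hf : MapsI f) :
    BddAbove {v | ∃ y ∈ Set.Icc (0:ℝ) 1, ∃ z ∈ Set.Icc (0:ℝ) 1, min y z = x ∧ v = min (f y) (g z)} := by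
  refine ⟨1, ?_⟩
  rintro _ ⟨y, hy, z, hz, hm, rfl⟩
  exact le_trans (min_le_left _ _) (hf y hy).2

lemma inter_eq_s17 (hf : MapsI f) (hg : MapsI g) (hx : x ∈ Set.Icc (0:ℝ) 1) :
    inter f g x = max (min (f x) (fR g x)) (min (fR f x) (g x)) := by
  unfold inter
  apply le_antisymm
  · apply csSup_le (interSet_nonempty hx)
    rintro _ ⟨y, hy, z, hz, hm, rfl⟩
    rcases le_total y z with hyz | hzy
    · rw [min_eq_left hyz] at hm; subst hm
      exact le_max_of_le_left (min_le_min le_rfl (le_fR hg hx.1 ⟨hyz, hz.2⟩))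
    · rw [min_eq_right hzy] at hm; subst hm
      exact le_max_of_le_right (min_le_min (le_fR hf hx.1 ⟨hzy, hy.2⟩) le_rfl)
  · apply max_le
    · rw [Real.le_sSup_iff (interSet_bdd hf) (interSet_nonempty hx)]
      intro ε hε
      obtain ⟨_, ⟨z, hz, rfl⟩, hw⟩ := exists_lt_of_lt_csSup
        (⟨g x, x, ⟨le_rfl, hx.2⟩, rfl⟩ : (g '' Set.Icc x 1).Nonempty)
        (show fR g x + ε < fR g x by linarith)
      refine ⟨min (f x) (g z), ⟨x, hx, z, ⟨le_trans hx.1 hz.1, hz.2⟩, min_eq_left hz.1, rfl⟩, ?_⟩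
      rcases le_total (f x) (g z) with h' | h'
      · have := min_le_left (f x) (fR g x); rw [min_eq_left h']; linarith
      · have := min_le_right (f x) (fR g x); rw [min_eq_right h']; linarith
    · rw [Real.le_sSup_iff (interSet_bdd hf) (interSet_nonempty hx)]
      intro ε hε
      obtain ⟨_, ⟨y, hy, rfl⟩, hw⟩ := exists_lt_of_lt_csSup
        (⟨f x, x, ⟨le_rfl, hx.2⟩, rfl⟩ : (f '' Set.Icc x 1).Nonempty)
        (show fR f x + ε < fR f x by linarith)
      refine ⟨min (f y) (g x), ⟨y, ⟨le_trans hx.1 hy.1, hy.2⟩, x, hx, min_eq_right hy.1, rfl⟩, ?_⟩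
      rcases le_total (g x) (f y) with h' | h'
      · have := min_le_right (fR f x) (g x); rw [min_eq_right h']; linarith
      · have := min_le_left (fR f x) (g x); rw [min_eq_left h']; linarith

lemma inter_mem (hf : MapsI f) (hg : MapsI g) (hx : x ∈ Set.Icc (0:ℝ) 1) :
    inter f g x ∈ Set.Icc (0:ℝ) 1 := by
  rw [inter_eq_s17 hf hg hx]
  constructor
  · exact le_trans (le_min (hf x hx).1 (fR_mem hg hx).1) (le_max_left _ _)
  · exact max_le (le_trans (min_le_left _ _) (hf x hx).2)
      (le_trans (min_le_right _ _) (hg x hx).2)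

lemma inter_one (hf : MapsI f) (hg : MapsI g) : inter f g 1 = min (f 1) (g 1) := by
  rw [inter_eq_s17 hf hg ⟨zero_le_one, le_rfl⟩, fR_one, fR_one, max_self]

lemma mapsI_inter (hf : MapsI f) (hg : MapsI g) : MapsI (inter f g) :=
  fun x hx => inter_mem hf hg hx

lemma mapsI_star (hf : MapsI f) (hg : MapsI g) : MapsI (star f g) := by
  unfold _root_.star
  split_ifs with h1 h2 h3
  · exact hg
  · exact hf
  · exact mapsI_inter hf hg
  · intro x hx
    by_cases hx1 : x = 1
    · simp [hx1]
    · simp only [hx1, if_false]; exact inter_mem hf hg hx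

lemma star_apply_lt (hf' : ¬ Set.EqOn f ind1 (Set.Icc (0:ℝ) 1))
    (hg' : ¬ Set.EqOn g ind1 (Set.Icc (0:ℝ) 1)) (hx1 : x ≠ 1) :
    star f g x = inter f g x := by
  unfold _root_.star
  rw [if_neg hf', if_neg hg']
  split_ifs with h
  · rfl
  · simp [hx1]

lemma star_at_one (hf' : ¬ Set.EqOn f ind1 (Set.Icc (0:ℝ) 1))
    (hg' : ¬ Set.EqOn g ind1 (Set.Icc (0:ℝ) 1)) (hf : MapsI f) (hg : MapsI g) :
    star f g 1 = if min (f 1) (g 1) = 1 then 1 else 0 := by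
  unfold _root_.star
  rw [if_neg hf', if_neg hg']
  split_ifs with h
  · rw [inter_one hf hg, h]
  · simp

/-- Near-sup attained strictly below 1, using normality and convexity. -/
lemma exists_near (hg : MapsI g) (hgn : NormalFn g) (hgc : ConvexFn g) (hq : g 1 < 1)
    (hx : x ∈ Set.Ico (0:ℝ) 1) {ε : ℝ} (hε : 0 < ε) :
    ∃ t ∈ Set.Ico x 1, fR g x - ε ≤ g t := by
  have hxI : x ∈ Set.Icc (0:ℝ) 1 := ⟨hx.1, hx.2.le⟩
  obtain ⟨_, ⟨u, hu, rfl⟩, hu'⟩ := exists_lt_of_lt_csSup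
    (⟨g x, x, ⟨le_rfl, hxI.2⟩, rfl⟩ : (g '' Set.Icc x 1).Nonempty)
    (show fR g x - ε < fR g x by linarith)
  by_cases hu1 : u < 1
  · exact ⟨u, ⟨hu.1, hu1⟩, hu'.le⟩
  · have hu1' : u = 1 := le_antisymm hu.2 (not_lt.mp hu1)
    subst hu1'
    -- g 1 > fR g x - ε ; find s < 1 with g s large
    have hc : max (g 1) (fR g x - ε) < 1 := by
      apply max_lt hq
      have := (fR_mem hg hxI).2
      linarith
    obtain ⟨_, ⟨s, hs, rfl⟩, hs'⟩ := exists_lt_of_lt_csSup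
      (⟨g 0, 0, ⟨le_rfl, zero_le_one⟩, rfl⟩ : (g '' Set.Icc 0 1).Nonempty)
      (by rw [hgn]; exact hc)
    have hs1 : s < 1 := by
      rcases lt_or_eq_of_le hs.2 with h' | h'
      · exact h'
      · exfalso; rw [h'] at hs'; exact absurd hs' (not_lt.mpr (le_max_left _ _))
    rcases le_total x s with hxs | hsx
    · exact ⟨s, ⟨hxs, hs1⟩, le_of_lt (lt_of_le_of_lt (le_max_right _ _) hs')⟩
    · refine ⟨x, ⟨le_rfl, hx.2⟩, ?_⟩
      have hconv := hgc s x 1 hs.1 hsx hx.2.le le_rfl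
      have : min (g s) (g 1) = g 1 :=
        min_eq_right (le_of_lt (lt_of_le_of_lt (le_max_left _ _) hs'))
      rw [this] at hconv
      linarith

/-- Key witness lemma for fR of the intersection. -/
lemma exists_witness (hf : MapsI f) (hg : MapsI g) (hgn : NormalFn g) (hgc : ConvexFn g)
    (hq : g 1 < 1) (hx : x ∈ Set.Ico (0:ℝ) 1) {ε : ℝ} (hε : 0 < ε) :
    ∃ t ∈ Set.Ico x 1,
      min (fR f x) (fR g x) - ε ≤ max (min (f t) (fR g t)) (min (fR f t) (g t)) := by
  obtain ⟨t, ht, hgt⟩ := exists_near hg hgn hgc hq hx hε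
  obtain ⟨_, ⟨s, hs, rfl⟩, hfs⟩ := exists_lt_of_lt_csSup
    (⟨f x, x, ⟨le_rfl, hx.2.le⟩, rfl⟩ : (f '' Set.Icc x 1).Nonempty)
    (show fR f x - ε < fR f x by linarith)
  have hm1 : min (fR f x) (fR g x) - ε ≤ f s := by
    have := min_le_left (fR f x) (fR g x); linarith
  have hm2 : min (fR f x) (fR g x) - ε ≤ g t := by
    have := min_le_right (fR f x) (fR g x); linarith
  rcases le_total s t with hst | hts
  · refine ⟨s, ⟨hs.1, lt_of_le_of_lt hst ht.2⟩, le_trans ?_ (le_max_left _ _)⟩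
    refine le_min hm1 (le_trans hm2 ?_)
    exact le_fR hg (le_trans hx.1 hs.1) ⟨hst, ht.2.le⟩
  · refine ⟨t, ht, le_trans ?_ (le_max_right _ _)⟩
    refine le_min (le_trans hm1 ?_) hm2
    exact le_fR hf (le_trans hx.1 ht.1) ⟨hts, hs.2⟩

lemma fR_star (hf : MapsI f) (hg : MapsI g) (hfn : NormalFn f) (hfc : ConvexFn f)
    (hgn : NormalFn g) (hgc : ConvexFn g)
    (hf' : ¬ Set.EqOn f ind1 (Set.Icc (0:ℝ) 1)) (hg' : ¬ Set.EqOn g ind1 (Set.Icc (0:ℝ) 1))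
    (hx : x ∈ Set.Ico (0:ℝ) 1) :
    fR (star f g) x = min (fR f x) (fR g x) := by
  have hxI : x ∈ Set.Icc (0:ℝ) 1 := ⟨hx.1, hx.2.le⟩
  have hp1 : f 1 ∈ Set.Icc (0:ℝ) 1 := hf 1 ⟨zero_le_one, le_rfl⟩
  have hq1 : g 1 ∈ Set.Icc (0:ℝ) 1 := hg 1 ⟨zero_le_one, le_rfl⟩
  by_cases hpq : min (f 1) (g 1) = 1
  · -- p = q = 1
    have hp : f 1 = 1 := by
      have h1 : (1:ℝ) ≤ f 1 := le_of_eq_of_le hpq.symm (min_le_left (f 1) (g 1))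
      exact le_antisymm hp1.2 h1
    have hq : g 1 = 1 := by
      have h1 : (1:ℝ) ≤ g 1 := le_of_eq_of_le hpq.symm (min_le_right (f 1) (g 1))
      exact le_antisymm hq1.2 h1
    have hRf : fR f x = 1 := le_antisymm (fR_mem hf hxI).2
      (by calc (1:ℝ) = f 1 := hp.symm
            _ ≤ fR f x := le_fR hf hx.1 ⟨hx.2.le, le_rfl⟩)
    have hRg : fR g x = 1 := le_antisymm (fR_mem hg hxI).2
      (by calc (1:ℝ) = g 1 := hq.symm
            _ ≤ fR g x := le_fR hg hx.1 ⟨hx.2.le, le_rfl⟩)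
    rw [hRf, hRg, min_self]
    apply le_antisymm (fR_mem (mapsI_star hf hg) hxI).2
    calc (1:ℝ) = star f g 1 := by rw [star_at_one hf' hg' hf hg, if_pos hpq]
      _ ≤ fR (star f g) x := le_fR (mapsI_star hf hg) hx.1 ⟨hx.2.le, le_rfl⟩
  · have hne : ((star f g) '' Set.Icc x 1).Nonempty := ⟨_, x, ⟨le_rfl, hx.2.le⟩, rfl⟩
    apply le_antisymm
    · apply csSup_le hne
      rintro _ ⟨t, ht, rfl⟩
      by_cases ht1 : t = 1
      · subst ht1
        rw [star_at_one hf' hg' hf hg, if_neg hpq]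
        exact le_min (fR_mem hf hxI).1 (fR_mem hg hxI).1
      · rw [star_apply_lt hf' hg' ht1,
          inter_eq_s17 hf hg ⟨le_trans hx.1 ht.1, ht.2⟩]
        apply max_le
        · exact le_min (le_trans (min_le_left _ _) (le_fR hf hx.1 ht))
            (le_trans (min_le_right _ _) (fR_anti hg hx.1 ht.1 ht.2))
        · exact le_min (le_trans (min_le_left _ _) (fR_anti hf hx.1 ht.1 ht.2))
            (le_trans (min_le_right _ _) (le_fR hg hx.1 ht))
    · show min (fR f x) (fR g x) ≤ sSup ((star f g) '' Set.Icc x 1)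
      rw [Real.le_sSup_iff (bdd_img (mapsI_star hf hg) (Set.Icc_subset_Icc_left hx.1)) hne]
      intro ε hε
      have hε2 : 0 < -ε/2 := by linarith
      have key : ∃ t ∈ Set.Ico x 1,
          min (fR f x) (fR g x) - (-ε/2) ≤ max (min (f t) (fR g t)) (min (fR f t) (g t)) := by
        rcases lt_or_ge (g 1) 1 with hq | hq
        · exact exists_witness hf hg hgn hgc hq hx hε2
        · have hp : f 1 < 1 := by
            have hq' : g 1 = 1 := le_antisymm hq1.2 hq
            rcases lt_or_eq_of_le hp1.2 with h' | h'
            · exact h'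
            · exact absurd (by rw [h', hq', min_self]) hpq
          obtain ⟨t, ht, h'⟩ := exists_witness hg hf hfn hfc hp hx hε2
          refine ⟨t, ht, ?_⟩
          rw [min_comm (fR g x) (fR f x)] at h'
          rw [max_comm, min_comm (fR f t) (g t), min_comm (f t) (fR g t)]
          exact h'
      obtain ⟨t, ht, hE⟩ := key
      refine ⟨star f g t, ⟨t, ⟨ht.1, ht.2.le⟩, rfl⟩, ?_⟩
      rw [star_apply_lt hf' hg' (ne_of_lt ht.2),
        inter_eq_s17 hf hg ⟨le_trans hx.1 ht.1, ht.2.le⟩]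
      linarith

lemma exists_pos (hf : MapsI f) (hfn : NormalFn f)
    (hf' : ¬ Set.EqOn f ind1 (Set.Icc (0:ℝ) 1)) :
    ∃ x ∈ Set.Ico (0:ℝ) 1, 0 < f x := by
  by_contra hcon
  push_neg at hcon
  apply hf'
  intro x hx
  by_cases hx1 : x = 1
  · subst hx1
    have h1 : f 1 ≤ 1 := (hf 1 ⟨zero_le_one, le_rfl⟩).2
    have h2 : (1:ℝ) ≤ f 1 := by
      conv_lhs => rw [← hfn]
      have hne : (f '' Set.Icc (0:ℝ) 1).Nonempty := ⟨_, 0, ⟨le_rfl, zero_le_one⟩, rfl⟩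
      apply csSup_le hne
      rintro _ ⟨t, ht, rfl⟩
      by_cases ht1 : t = 1
      · subst ht1; exact le_rfl
      · exact le_trans (hcon t ⟨ht.1, lt_of_le_of_ne ht.2 ht1⟩)
          (hf 1 ⟨zero_le_one, le_rfl⟩).1
    simp [ind1, le_antisymm h1 h2]
  · have := hcon x ⟨hx.1, lt_of_le_of_ne hx.2 hx1⟩
    have h0 := (hf x hx).1
    simp [ind1, hx1, le_antisymm this h0]

lemma notA_star (hf : MapsI f) (hg : MapsI g) (hfn : NormalFn f) (hgn : NormalFn g)
    (hf' : ¬ Set.EqOn f ind1 (Set.Icc (0:ℝ) 1)) (hg' : ¬ Set.EqOn g ind1 (Set.Icc (0:ℝ) 1)) :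
    ¬ Set.EqOn (star f g) ind1 (Set.Icc (0:ℝ) 1) := by
  obtain ⟨a, ha, hfa⟩ := exists_pos hf hfn hf'
  obtain ⟨b, hb, hgb⟩ := exists_pos hg hgn hg'
  have key : ∃ w ∈ Set.Ico (0:ℝ) 1, 0 < star f g w := by
    rcases le_total a b with hab | hba
    · refine ⟨a, ha, ?_⟩
      rw [star_apply_lt hf' hg' (ne_of_lt ha.2), inter_eq_s17 hf hg ⟨ha.1, ha.2.le⟩]
      have : 0 < min (f a) (fR g a) :=
        lt_min hfa (lt_of_lt_of_le hgb (le_fR hg ha.1 ⟨hab, hb.2.le⟩))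
      exact lt_of_lt_of_le this (le_max_left _ _)
    · refine ⟨b, hb, ?_⟩
      rw [star_apply_lt hf' hg' (ne_of_lt hb.2), inter_eq_s17 hf hg ⟨hb.1, hb.2.le⟩]
      have : 0 < min (fR f b) (g b) :=
        lt_min (lt_of_lt_of_le hfa (le_fR hf hb.1 ⟨hba, ha.2.le⟩)) hgb
      exact lt_of_lt_of_le this (le_max_right _ _)
  obtain ⟨w, hw, hw'⟩ := key
  intro hEq
  have := hEq ⟨hw.1, hw.2.le⟩
  rw [this] at hw'
  simp [ind1, ne_of_lt hw.2] at hw'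

lemma lattice_id (a b c A B C : ℝ) :
    max (min (max (min a B) (min A b)) C) (min (min A B) c)
    = max (min a (min B C)) (min A (max (min b C) (min B c))) := by
  rw [min_max_distrib_right, min_max_distrib_left, min_assoc, min_assoc, min_assoc, max_assoc]

lemma star_ind1_left {a b : ℝ → ℝ} (ha : Set.EqOn a ind1 (Set.Icc (0:ℝ) 1)) :
    star a b = b := by
  unfold _root_.star; rw [if_pos ha]

lemma star_ind1_right {a b : ℝ → ℝ} (ha : ¬ Set.EqOn a ind1 (Set.Icc (0:ℝ) 1))
    (hb : Set.EqOn b ind1 (Set.Icc (0:ℝ) 1)) : star a b = a := by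
  unfold _root_.star; rw [if_neg ha, if_pos hb]

/-- `⋆` is associative on normal convex functions. -/
theorem stmt_17 (f g h : ℝ → ℝ) (hf : MapsI f) (hg : MapsI g) (hh : MapsI h)
    (hfn : NormalFn f) (hfc : ConvexFn f) (hgn : NormalFn g) (hgc : ConvexFn g)
    (hhn : NormalFn h) (hhc : ConvexFn h) :
    Set.EqOn (star (star f g) h) (star f (star g h)) (Set.Icc (0:ℝ) 1) := by
  by_cases hAf : Set.EqOn f ind1 (Set.Icc (0:ℝ) 1)
  · rw [star_ind1_left hAf, star_ind1_left hAf]; exact fun x _ => rfl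
  by_cases hAg : Set.EqOn g ind1 (Set.Icc (0:ℝ) 1)
  · rw [star_ind1_right hAf hAg, star_ind1_left hAg]; exact fun x _ => rfl
  by_cases hAh : Set.EqOn h ind1 (Set.Icc (0:ℝ) 1)
  · rw [star_ind1_right (notA_star hf hg hfn hgn hAf hAg) hAh, star_ind1_right hAg hAh]
    exact fun x _ => rfl
  -- main case
  have hns1 : ¬ Set.EqOn (star f g) ind1 (Set.Icc (0:ℝ) 1) := notA_star hf hg hfn hgn hAf hAg
  have hns2 : ¬ Set.EqOn (star g h) ind1 (Set.Icc (0:ℝ) 1) := notA_star hg hh hgn hhn hAg hAh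
  have hms1 : MapsI (star f g) := mapsI_star hf hg
  have hms2 : MapsI (star g h) := mapsI_star hg hh
  intro x hx
  rcases lt_or_eq_of_le hx.2 with hx1 | hx1
  · -- x < 1
    have hxI : x ∈ Set.Ico (0:ℝ) 1 := ⟨hx.1, hx1⟩
    rw [star_apply_lt hns1 hAh (ne_of_lt hx1), inter_eq_s17 hms1 hh hx,
        star_apply_lt hAf hns2 (ne_of_lt hx1), inter_eq_s17 hf hms2 hx,
        star_apply_lt hAf hAg (ne_of_lt hx1), inter_eq_s17 hf hg hx,
        star_apply_lt hAg hAh (ne_of_lt hx1), inter_eq_s17 hg hh hx,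
        fR_star hf hg hfn hfc hgn hgc hAf hAg hxI,
        fR_star hg hh hgn hgc hhn hhc hAg hAh hxI]
    exact lattice_id (f x) (g x) (h x) (fR f x) (fR g x) (fR h x)
  · -- x = 1
    subst hx1
    rw [star_at_one hns1 hAh hms1 hh, star_at_one hAf hns2 hf hms2,
        star_at_one hAf hAg hf hg, star_at_one hAg hAh hg hh]
    have hf1 := hf 1 ⟨zero_le_one, le_rfl⟩
    have hg1 := hg 1 ⟨zero_le_one, le_rfl⟩
    have hh1 := hh 1 ⟨zero_le_one, le_rfl⟩
    by_cases hfg : min (f 1) (g 1) = 1 <;> by_cases hgh : min (g 1) (h 1) = 1 <;>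
      simp only [hfg, hgh, if_true, if_false, if_pos, if_neg, ite_true, ite_false]
    · have hp : f 1 = 1 := le_antisymm hf1.2 (le_of_eq_of_le hfg.symm (min_le_left _ _))
      have hr : h 1 = 1 := le_antisymm hh1.2 (le_of_eq_of_le hgh.symm (min_le_right _ _))
      rw [hp, hr]
    · have hq : g 1 = 1 := le_antisymm hg1.2 (le_of_eq_of_le hfg.symm (min_le_right _ _))
      have hr : h 1 ≠ 1 := fun hhh => hgh (by rw [hq, hhh, min_self])
      rw [min_eq_right hh1.2, min_eq_right hf1.1, if_neg hr, if_neg (by norm_num)]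
    · have hq : g 1 = 1 := le_antisymm hg1.2 (le_of_eq_of_le hgh.symm (min_le_left _ _))
      have hp : f 1 ≠ 1 := fun hp => hfg (by rw [hp, hq, min_self])
      rw [min_eq_left hh1.1, min_eq_left hf1.2, if_neg (by norm_num), if_neg hp]
    · rw [min_eq_left hh1.1, min_eq_right hf1.1]
end Aux
end
end
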